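/- (Stackelberg gradient equals the policy gradient.) Assume μ0(s) > 0 for all s and π_θ(s,a) > 0 for all (s,a), and fix q ∈ ℝ^{S×A}. Define the actor objective J_π(θ,q) := (1−γ) μ0ᵀ Π_θ q and the on-policy critic objective J_q(θ,q) := ½ (r − Ψ_θ q)ᵀ Δ(d_θ) (r − Ψ_θ q). Let v := ∂_q J_π = (1−γ) Π_θᵀ μ0, let Hes := ∂_q² J_q = Ψ_θᵀ Δ(d_θ) Ψ_θ (which is invertible), and let M ∈ ℝ^{n × (S×A)} be the Jacobian in θ of the map θ ↦ ∂_q J_q(θ,q) = Ψ_θᵀ Δ(d_θ)(Ψ_θ q − r) with q held fixed. Then the Stackelberg gradient g := ∂_θ J_π(θ,q) − M · Hes⁻¹ · v satisfies g = ∂_θ J_π(θ,q) + ∇_θ (d_θᵀ (r − Ψ_θ q)) = ∇_θ J(θ), the true policy gradient of J(θ) := d_θᵀ r. -/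

import Mathlib

set_option linter.unusedSectionVars false
set_option linter.unusedVariables false


open Matrix

noncomputable section

variable {S A : Type*} [Fintype S] [Fintype A] [DecidableEq S] [DecidableEq A]
  [Nonempty S] [Nonempty A]

/-- A policy: nonnegative entries, and for each state the action probabilities sum to one. -/
def IsPolicy (x : S × A → ℝ) : Prop :=
  (∀ p, 0 ≤ x p) ∧ ∀ s : S, ∑ a : A, x (s, a) = 1

/-- A row-stochastic transition matrix. -/
def IsStochasticMat (P : Matrix (S × A) S ℝ) : Prop :=
  (∀ p s, 0 ≤ P p s) ∧ ∀ p, ∑ s : S, P p s = 1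

/-- A probability vector on states. -/
def IsProbVec (μ : S → ℝ) : Prop :=
  (∀ s, 0 ≤ μ s) ∧ ∑ s : S, μ s = 1

/-- The block policy matrix `Π(x) ∈ ℝ^{S × (S×A)}`. -/
def piMat (x : S × A → ℝ) : Matrix S (S × A) ℝ :=
  Matrix.of fun s p => if p.1 = s then x p else 0

/-- The action-marginalization matrix `Ξ ∈ ℝ^{S × (S×A)}`. -/
def xiMat : Matrix S (S × A) ℝ :=
  Matrix.of fun s p => if p.1 = s then (1 : ℝ) else 0

/-- `Ψ(x) = I - γ P Π(x)`. -/
def psiMat (P : Matrix (S × A) S ℝ) (γ : ℝ) (x : S × A → ℝ) :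
    Matrix (S × A) (S × A) ℝ :=
  1 - γ • (P * piMat x)

/-- The discounted state-action occupancy `d(x) = (1-γ)(Ψ(x)ᵀ)⁻¹ Π(x)ᵀ μ0`. -/
def dOcc (P : Matrix (S × A) S ℝ) (γ : ℝ) (μ0 : S → ℝ) (x : S × A → ℝ) :
    S × A → ℝ :=
  (1 - γ) • (((psiMat P γ x)ᵀ)⁻¹ *ᵥ ((piMat x)ᵀ *ᵥ μ0))

-- row sums of piMat
lemma piMat_row_sum (x : S × A → ℝ) (hx : IsPolicy x) (s : S) :
    ∑ p : S × A, piMat x s p = 1 := by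
  rw [Fintype.sum_prod_type]
  have : ∀ s' : S, ∑ a : A, piMat x s (s', a) = if s' = s then 1 else 0 := by
    intro s'
    by_cases h : s' = s
    · simp [piMat, h, hx.2 s]
    · simp [piMat, h]
  simp [this]

lemma pB_row_sum (P : Matrix (S × A) S ℝ) (hP : IsStochasticMat P)
    (x : S × A → ℝ) (hx : IsPolicy x) (p : S × A) :
    ∑ p' : S × A, (P * piMat x) p p' = 1 := by
  simp only [Matrix.mul_apply]
  rw [Finset.sum_comm]
  calc ∑ s : S, ∑ p' : S × A, P p s * piMat x s p'
      = ∑ s : S, P p s * ∑ p' : S × A, piMat x s p' := by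
        simp [Finset.mul_sum]
    _ = 1 := by simp [piMat_row_sum x hx, hP.2 p]

lemma pB_nonneg (P : Matrix (S × A) S ℝ) (hP : IsStochasticMat P)
    (x : S × A → ℝ) (hx : IsPolicy x) (p p' : S × A) :
    0 ≤ (P * piMat x) p p' := by
  rw [Matrix.mul_apply]
  refine Finset.sum_nonneg fun s _ => mul_nonneg (hP.1 p s) ?_
  by_cases h : p'.1 = s <;> simp [piMat, h, hx.1 p']
section Neumann
attribute [local instance] Matrix.linftyOpNormedAddCommGroup Matrix.linftyOpNormedRing
  Matrix.linftyOpNormedSpace Matrix.linftyOpNormedAlgebra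

variable (P : Matrix (S × A) S ℝ) (γ : ℝ) (x : S × A → ℝ)

lemma gB_norm_lt_one (hP : IsStochasticMat P) (hγ0 : 0 ≤ γ) (hγ1 : γ < 1)
    (hx : IsPolicy x) : ‖γ • (P * piMat x)‖ < 1 := by
  have hB : ‖P * piMat x‖ = 1 := by
    rw [Matrix.linfty_opNorm_def]
    have h1 : ∀ p : S × A, (∑ p' : S × A, ‖(P * piMat x) p p'‖₊) = 1 := by
      intro p
      have := pB_row_sum P hP x hx p
      have h0 := pB_nonneg P hP x hx p
      ext
      push_cast
      simp only [coe_nnnorm, Real.norm_eq_abs]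
      rw [← this]
      exact Finset.sum_congr rfl fun p' _ => abs_of_nonneg (h0 p')
    simp only [h1]
    rw [Finset.sup_const Finset.univ_nonempty]
    norm_num
  rw [norm_smul, hB, mul_one, Real.norm_eq_abs, abs_of_nonneg hγ0]
  exact hγ1

lemma psi_hasSum (hP : IsStochasticMat P) (hγ0 : 0 ≤ γ) (hγ1 : γ < 1) (hx : IsPolicy x) :
    HasSum (fun i => (γ • (P * piMat x)) ^ i) (Ring.inverse (psiMat P γ x)) := by
  have := hasSum_geom_series_inverse (γ • (P * piMat x)) (gB_norm_lt_one P γ x hP hγ0 hγ1 hx)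
  show HasSum _ (Ring.inverse (1 - γ • (P * piMat x)))
  exact this

lemma psi_isUnit (hP : IsStochasticMat P) (hγ0 : 0 ≤ γ) (hγ1 : γ < 1) (hx : IsPolicy x) :
    IsUnit (psiMat P γ x) := by
  have := isUnit_one_sub_of_norm_lt_one (gB_norm_lt_one P γ x hP hγ0 hγ1 hx)
  simpa [psiMat] using this

lemma gB_pow_nonneg (hP : IsStochasticMat P) (hγ0 : 0 ≤ γ) (hx : IsPolicy x)
    (i : ℕ) (p p' : S × A) : 0 ≤ ((γ • (P * piMat x)) ^ i) p p' := by
  induction i generalizing p p' with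
  | zero => by_cases h : p = p' <;> simp [pow_zero, Matrix.one_apply, h]
  | succ k ih =>
    rw [pow_succ, Matrix.mul_apply]
    refine Finset.sum_nonneg fun j _ => mul_nonneg (ih p j) ?_
    simp only [Matrix.smul_apply, smul_eq_mul]
    exact mul_nonneg hγ0 (pB_nonneg P hP x hx j p')

lemma psi_inv_entry_hasSum (hP : IsStochasticMat P) (hγ0 : 0 ≤ γ) (hγ1 : γ < 1)
    (hx : IsPolicy x) (p p' : S × A) :
    HasSum (fun i => (((γ • (P * piMat x)) ^ i : Matrix (S × A) (S × A) ℝ)) p p') ((psiMat P γ x)⁻¹ p p') := by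
  have h := psi_hasSum P γ x hP hγ0 hγ1 hx
  rw [← Matrix.nonsing_inv_eq_ringInverse] at h
  let lm : Matrix (S × A) (S × A) ℝ →ₗ[ℝ] ℝ :=
    { toFun := fun M => M p p', map_add' := fun _ _ => rfl, map_smul' := fun _ _ => rfl }
  exact h.mapL lm.toContinuousLinearMap

lemma psi_inv_nonneg (hP : IsStochasticMat P) (hγ0 : 0 ≤ γ) (hγ1 : γ < 1)
    (hx : IsPolicy x) (p p' : S × A) : 0 ≤ (psiMat P γ x)⁻¹ p p' :=
  (psi_inv_entry_hasSum P γ x hP hγ0 hγ1 hx p p').tsum_eq ▸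
    tsum_nonneg fun i => gB_pow_nonneg P γ x hP hγ0 hx i p p'

lemma psi_inv_diag_ge_one (hP : IsStochasticMat P) (hγ0 : 0 ≤ γ) (hγ1 : γ < 1)
    (hx : IsPolicy x) (p : S × A) : 1 ≤ (psiMat P γ x)⁻¹ p p := by
  have h := psi_inv_entry_hasSum P γ x hP hγ0 hγ1 hx p p
  have h1 : (((γ • (P * piMat x)) ^ 0 : Matrix (S × A) (S × A) ℝ)) p p = 1 := by simp [Matrix.one_apply]
  calc (1 : ℝ) = (((γ • (P * piMat x)) ^ 0 : Matrix (S × A) (S × A) ℝ)) p p := h1.symm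
    _ ≤ ∑' i, (((γ • (P * piMat x)) ^ i : Matrix (S × A) (S × A) ℝ)) p p :=
        Summable.le_tsum h.summable 0 (fun i _ => gB_pow_nonneg P γ x hP hγ0 hx i p p)
    _ = _ := h.tsum_eq

end Neumann
section Identities
variable (P : Matrix (S × A) S ℝ) (γ : ℝ) (x : S × A → ℝ) (μ0 : S → ℝ)

lemma piMatT_mulVec (p : S × A) : ((piMat x)ᵀ *ᵥ μ0) p = x p * μ0 p.1 := by
  simp only [Matrix.mulVec, dotProduct, Matrix.transpose_apply, piMat, Matrix.of_apply]
  rw [Finset.sum_eq_single p.1] <;> simp +contextual [eq_comm, mul_comm]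

lemma psiT_det_isUnit (hP : IsStochasticMat P) (hγ0 : 0 ≤ γ) (hγ1 : γ < 1)
    (hx : IsPolicy x) : IsUnit (psiMat P γ x)ᵀ.det := by
  rw [Matrix.det_transpose]
  exact (Matrix.isUnit_iff_isUnit_det _).mp (psi_isUnit P γ x hP hγ0 hγ1 hx)

lemma dOcc_pos (hP : IsStochasticMat P) (hγ0 : 0 ≤ γ) (hγ1 : γ < 1)
    (hx : IsPolicy x) (hμ0pos : ∀ s, 0 < μ0 s) (hxpos : ∀ p, 0 < x p) (p : S × A) :
    0 < dOcc P γ μ0 x p := by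
  have hw : ∀ p' : S × A, 0 < ((piMat x)ᵀ *ᵥ μ0) p' := by
    intro p'; rw [piMatT_mulVec]; exact mul_pos (hxpos p') (hμ0pos p'.1)
  have hinv : ∀ p1 p2 : S × A, 0 ≤ ((psiMat P γ x)ᵀ)⁻¹ p1 p2 := by
    intro p1 p2
    rw [← Matrix.transpose_nonsing_inv, Matrix.transpose_apply]
    exact psi_inv_nonneg P γ x hP hγ0 hγ1 hx p2 p1
  have hdiag : 1 ≤ ((psiMat P γ x)ᵀ)⁻¹ p p := by
    rw [← Matrix.transpose_nonsing_inv, Matrix.transpose_apply]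
    exact psi_inv_diag_ge_one P γ x hP hγ0 hγ1 hx p
  have key : ((piMat x)ᵀ *ᵥ μ0) p ≤ (((psiMat P γ x)ᵀ)⁻¹ *ᵥ ((piMat x)ᵀ *ᵥ μ0)) p := by
    simp only [Matrix.mulVec, dotProduct]
    calc ((piMat x)ᵀ *ᵥ μ0) p = 1 * ((piMat x)ᵀ *ᵥ μ0) p := (one_mul _).symm
      _ ≤ ((psiMat P γ x)ᵀ)⁻¹ p p * ((piMat x)ᵀ *ᵥ μ0) p :=
          mul_le_mul_of_nonneg_right hdiag (hw p).le
      _ ≤ _ := Finset.single_le_sum (f := fun p2 => ((psiMat P γ x)ᵀ)⁻¹ p p2 * ((piMat x)ᵀ *ᵥ μ0) p2)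
          (fun i _ => mul_nonneg (hinv p i) (hw i).le) (Finset.mem_univ p)
  have : 0 < (((psiMat P γ x)ᵀ)⁻¹ *ᵥ ((piMat x)ᵀ *ᵥ μ0)) p := lt_of_lt_of_le (hw p) key
  simpa [dOcc] using mul_pos (by linarith : (0:ℝ) < 1 - γ) this

lemma psiMat_mulVec_ones (hP : IsStochasticMat P) (hx : IsPolicy x) :
    psiMat P γ x *ᵥ (fun _ => (1:ℝ)) = fun _ => (1 - γ) := by
  funext p
  simp only [psiMat, Matrix.sub_mulVec, Matrix.smul_mulVec, Matrix.one_mulVec,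
    Pi.sub_apply, Pi.smul_apply, smul_eq_mul]
  have : ((P * piMat x) *ᵥ fun _ => (1:ℝ)) p = 1 := by
    simp only [Matrix.mulVec, dotProduct, mul_one]
    exact pB_row_sum P hP x hx p
  rw [this]; ring

lemma psiT_mulVec_dOcc (hP : IsStochasticMat P) (hγ0 : 0 ≤ γ) (hγ1 : γ < 1)
    (hx : IsPolicy x) :
    (psiMat P γ x)ᵀ *ᵥ dOcc P γ μ0 x = (1 - γ) • ((piMat x)ᵀ *ᵥ μ0) := by
  have hdet : IsUnit (psiMat P γ x)ᵀ.det := psiT_det_isUnit P γ x hP hγ0 hγ1 hx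
  rw [dOcc, Matrix.mulVec_smul, Matrix.mulVec_mulVec, Matrix.mul_nonsing_inv _ hdet,
    Matrix.one_mulVec]

end Identities
section Diff
variable {n : ℕ}

theorem Differentiable.finset_prod' {ι : Type*} [DecidableEq ι] {u : Finset ι}
    {g : ι → (Fin n → ℝ) → ℝ} (h : ∀ i, Differentiable ℝ (g i)) :
    Differentiable ℝ (fun t => ∏ i ∈ u, g i t) := fun x =>
  (HasFDerivAt.finset_prod (u := u) (fun i _ => (h i x).hasFDerivAt)).differentiableAt

theorem Differentiable.matrix_det {ι : Type*} [Fintype ι] [DecidableEq ι]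
    {f : (Fin n → ℝ) → Matrix ι ι ℝ} (h : ∀ i j, Differentiable ℝ (fun t => f t i j)) :
    Differentiable ℝ (fun t => (f t).det) := by
  have e : (fun t => (f t).det)
      = fun t => ∑ σ : Equiv.Perm ι, ((Equiv.Perm.sign σ : ℤ) : ℝ) * ∏ i, f t (σ i) i := by
    funext t; rw [Matrix.det_apply']
  rw [e]
  exact Differentiable.fun_sum fun σ _ =>
    (Differentiable.finset_prod' fun i => h (σ i) i).const_mul _

variable (P : Matrix (S × A) S ℝ) (γ : ℝ) (μ0 : S → ℝ) (π : (Fin n → ℝ) → S × A → ℝ)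

lemma diff_pi_entry (hdiff : Differentiable ℝ π) (p : S × A) :
    Differentiable ℝ (fun t => π t p) := differentiable_pi.mp hdiff p

lemma diff_piMat_entry (hdiff : Differentiable ℝ π) (s : S) (p : S × A) :
    Differentiable ℝ (fun t => piMat (π t) s p) := by
  have e : (fun t => piMat (π t) s p) = fun t => if p.1 = s then π t p else 0 := rfl
  rw [e]
  by_cases h : p.1 = s <;> simp only [h, if_true, if_false]
  · exact diff_pi_entry π hdiff p
  · exact differentiable_const 0

lemma diff_psi_entry (hdiff : Differentiable ℝ π) (p p' : S × A) :
    Differentiable ℝ (fun t => psiMat P γ (π t) p p') := by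
  have e : (fun t => psiMat P γ (π t) p p')
      = fun t => (if p = p' then (1:ℝ) else 0) - γ * ∑ s, P p s * piMat (π t) s p' := by
    funext t
    simp [psiMat, Matrix.sub_apply, Matrix.smul_apply, Matrix.mul_apply, Matrix.one_apply]
  rw [e]
  exact (differentiable_const _).sub
    ((Differentiable.fun_sum fun s _ => (diff_piMat_entry π hdiff s p').const_mul (P p s)).const_mul γ)

lemma diff_psiT_det (hdiff : Differentiable ℝ π) :
    Differentiable ℝ (fun t => ((psiMat P γ (π t))ᵀ).det) :=
  Differentiable.matrix_det fun i j => by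
    simpa [Matrix.transpose_apply] using diff_psi_entry P γ π hdiff j i

lemma diff_psiT_inv_entry (hP : IsStochasticMat P) (hγ0 : 0 ≤ γ) (hγ1 : γ < 1)
    (hdiff : Differentiable ℝ π) (hpol : ∀ t, IsPolicy (π t)) (p1 p2 : S × A) :
    Differentiable ℝ (fun t => ((psiMat P γ (π t))ᵀ)⁻¹ p1 p2) := by
  have e : (fun t => ((psiMat P γ (π t))ᵀ)⁻¹ p1 p2)
      = fun t => (((psiMat P γ (π t))ᵀ).det)⁻¹ *
          (((psiMat P γ (π t))ᵀ).updateRow p2 (Pi.single p1 1)).det := by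
    funext t
    rw [Matrix.inv_def, Matrix.smul_apply, Matrix.adjugate_apply, Ring.inverse_eq_inv']
    rfl
  rw [e]
  have hdet := diff_psiT_det P γ π hdiff
  have hdet0 : ∀ t, ((psiMat P γ (π t))ᵀ).det ≠ 0 := fun t =>
    (psiT_det_isUnit P γ (π t) hP hγ0 hγ1 (hpol t)).ne_zero
  have hadj : Differentiable ℝ
      (fun t => (((psiMat P γ (π t))ᵀ).updateRow p2 (Pi.single p1 1)).det) := by
    refine Differentiable.matrix_det fun i j => ?_
    have e2 : (fun t => (((psiMat P γ (π t))ᵀ).updateRow p2 (Pi.single p1 1)) i j)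
        = fun t => if i = p2 then (Pi.single p1 1 : S × A → ℝ) j else psiMat P γ (π t) j i := by
      funext t
      rw [Matrix.updateRow_apply]
      by_cases h : i = p2 <;> simp [h, Matrix.transpose_apply]
    rw [e2]
    by_cases h : i = p2 <;> simp only [h, if_true, if_false]
    · exact differentiable_const _
    · exact diff_psi_entry P γ π hdiff j i
  exact (hdet.inv hdet0).mul hadj

lemma diff_dOcc_entry (hP : IsStochasticMat P) (hγ0 : 0 ≤ γ) (hγ1 : γ < 1)
    (hdiff : Differentiable ℝ π) (hpol : ∀ t, IsPolicy (π t)) (p : S × A) :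
    Differentiable ℝ (fun t => dOcc P γ μ0 (π t) p) := by
  have e : (fun t => dOcc P γ μ0 (π t) p)
      = fun t => (1 - γ) * ∑ p2, ((psiMat P γ (π t))ᵀ)⁻¹ p p2 * (π t p2 * μ0 p2.1) := by
    funext t
    simp only [dOcc, Pi.smul_apply, smul_eq_mul, Matrix.mulVec, dotProduct]
    congr 1
    refine Finset.sum_congr rfl fun p2 _ => ?_
    have := piMatT_mulVec (π t) μ0 p2
    simp only [Matrix.mulVec, dotProduct] at this
    rw [this]
  rw [e]
  exact (Differentiable.fun_sum fun p2 _ =>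
    (diff_psiT_inv_entry P γ π hP hγ0 hγ1 hdiff hpol p p2).mul
      ((diff_pi_entry π hdiff p2).mul_const (μ0 p2.1))).const_mul _

end Diff

/-- Stackelberg gradient equals the policy gradient: with full-support `μ0` and
`π_θ`, the Stackelberg gradient `g = ∂_θ J_π - M ⬝ Hes⁻¹ ⬝ v` (with `Hes = Ψ_θᵀ Δ(d_θ) Ψ_θ`
invertible, `v = (1-γ)Π_θᵀμ0`, and `M` the Jacobian in `θ` of `θ ↦ Ψ_θᵀ Δ(d_θ)(Ψ_θ q - r)`)
equals `∂_θ J_π + ∇_θ(d_θᵀ(r - Ψ_θ q))`, which is the true policy gradient `∇_θ J`. -/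
theorem stackelberg_gradient_is_policy_gradient
    (P : Matrix (S × A) S ℝ) (hP : IsStochasticMat P)
    (γ : ℝ) (hγ0 : 0 ≤ γ) (hγ1 : γ < 1)
    (r : S × A → ℝ) (μ0 : S → ℝ) (hμ0 : IsProbVec μ0)
    {n : ℕ} (π : (Fin n → ℝ) → S × A → ℝ)
    (hpol : ∀ θ, IsPolicy (π θ)) (hdiff : Differentiable ℝ π)
    (θ : Fin n → ℝ) (hμ0pos : ∀ s : S, 0 < μ0 s) (hπpos : ∀ p : S × A, 0 < π θ p)
    (q : S × A → ℝ) :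
    IsUnit ((psiMat P γ (π θ))ᵀ * Matrix.diagonal (dOcc P γ μ0 (π θ)) * psiMat P γ (π θ)) ∧
    ∀ i : Fin n,
      (fderiv ℝ (fun t => (1 - γ) * (μ0 ⬝ᵥ (piMat (π t) *ᵥ q))) θ (Pi.single i 1)
        - ((Matrix.of fun j p' =>
              fderiv ℝ
                (fun t => (psiMat P γ (π t))ᵀ *ᵥ
                  (Matrix.diagonal (dOcc P γ μ0 (π t)) *ᵥ (psiMat P γ (π t) *ᵥ q - r)))
                θ (Pi.single j 1) p')
            *ᵥ (((psiMat P γ (π θ))ᵀ * Matrix.diagonal (dOcc P γ μ0 (π θ)) * psiMat P γ (π θ))⁻¹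
              *ᵥ ((1 - γ) • ((piMat (π θ))ᵀ *ᵥ μ0)))) i
        = fderiv ℝ (fun t => (1 - γ) * (μ0 ⬝ᵥ (piMat (π t) *ᵥ q))) θ (Pi.single i 1)
          + fderiv ℝ (fun t => dOcc P γ μ0 (π t) ⬝ᵥ (r - psiMat P γ (π t) *ᵥ q)) θ
              (Pi.single i 1)) ∧
      (fderiv ℝ (fun t => (1 - γ) * (μ0 ⬝ᵥ (piMat (π t) *ᵥ q))) θ (Pi.single i 1)
        - ((Matrix.of fun j p' =>
              fderiv ℝ
                (fun t => (psiMat P γ (π t))ᵀ *ᵥ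
                  (Matrix.diagonal (dOcc P γ μ0 (π t)) *ᵥ (psiMat P γ (π t) *ᵥ q - r)))
                θ (Pi.single j 1) p')
            *ᵥ (((psiMat P γ (π θ))ᵀ * Matrix.diagonal (dOcc P γ μ0 (π θ)) * psiMat P γ (π θ))⁻¹
              *ᵥ ((1 - γ) • ((piMat (π θ))ᵀ *ᵥ μ0)))) i
        = fderiv ℝ (fun t => dOcc P γ μ0 (π t) ⬝ᵥ r) θ (Pi.single i 1)) := by
  have hx : IsPolicy (π θ) := hpol θ
  have h1γ : (0:ℝ) < 1 - γ := by linarith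
  have hne : (1:ℝ) - γ ≠ 0 := ne_of_gt h1γ
  have hdpos : ∀ p, 0 < dOcc P γ μ0 (π θ) p :=
    dOcc_pos P γ (π θ) μ0 hP hγ0 hγ1 hx hμ0pos hπpos
  have hΨdet : IsUnit (psiMat P γ (π θ)).det :=
    (Matrix.isUnit_iff_isUnit_det _).mp (psi_isUnit P γ (π θ) hP hγ0 hγ1 hx)
  have hΨTdet : IsUnit ((psiMat P γ (π θ))ᵀ).det := psiT_det_isUnit P γ (π θ) hP hγ0 hγ1 hx
  have hHesdet : IsUnit ((psiMat P γ (π θ))ᵀ * Matrix.diagonal (dOcc P γ μ0 (π θ)) *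
      psiMat P γ (π θ)).det := by
    rw [Matrix.det_mul, Matrix.det_mul, Matrix.det_diagonal, isUnit_iff_ne_zero]
    have hprod : (0:ℝ) < ∏ p, dOcc P γ μ0 (π θ) p := Finset.prod_pos fun p _ => hdpos p
    exact mul_ne_zero (mul_ne_zero hΨTdet.ne_zero (ne_of_gt hprod)) hΨdet.ne_zero
  refine ⟨(Matrix.isUnit_iff_isUnit_det _).mpr hHesdet, fun i => ?_⟩
  -- the vector u = Hes⁻¹ v is the constant vector (1-γ)⁻¹
  have hu : (((psiMat P γ (π θ))ᵀ * Matrix.diagonal (dOcc P γ μ0 (π θ)) * psiMat P γ (π θ))⁻¹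
      *ᵥ ((1 - γ) • ((piMat (π θ))ᵀ *ᵥ μ0))) = fun _ => (1 - γ)⁻¹ := by
    have hv : ((psiMat P γ (π θ))ᵀ * Matrix.diagonal (dOcc P γ μ0 (π θ)) * psiMat P γ (π θ))
        *ᵥ (fun _ => (1 - γ)⁻¹) = (1 - γ) • ((piMat (π θ))ᵀ *ᵥ μ0) := by
      rw [← Matrix.mulVec_mulVec, ← Matrix.mulVec_mulVec]
      have h1 : psiMat P γ (π θ) *ᵥ (fun _ => (1 - γ)⁻¹) = fun _ => (1:ℝ) := by
        have e : (fun _ => (1 - γ)⁻¹ : S × A → ℝ) = (1 - γ)⁻¹ • (fun _ => (1:ℝ)) := by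
          funext p; simp
        rw [e, Matrix.mulVec_smul, psiMat_mulVec_ones P γ (π θ) hP hx]
        funext p; simp [inv_mul_cancel₀ hne]
      rw [h1]
      have h2 : Matrix.diagonal (dOcc P γ μ0 (π θ)) *ᵥ (fun _ => (1:ℝ))
          = dOcc P γ μ0 (π θ) := by
        funext p; rw [Matrix.mulVec_diagonal]; ring
      rw [h2, psiT_mulVec_dOcc P γ (π θ) μ0 hP hγ0 hγ1 hx]
    rw [← hv, Matrix.mulVec_mulVec, Matrix.nonsing_inv_mul _ hHesdet, Matrix.one_mulVec]
  -- differentiability facts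
  have hf1 : Differentiable ℝ (fun t => (1 - γ) * (μ0 ⬝ᵥ (piMat (π t) *ᵥ q))) := by
    have e : (fun t => (1 - γ) * (μ0 ⬝ᵥ (piMat (π t) *ᵥ q)))
        = fun t => (1 - γ) * ∑ s, μ0 s * ∑ p, piMat (π t) s p * q p := by
      funext t; simp [dotProduct, Matrix.mulVec, Finset.mul_sum]
    rw [e]
    exact (Differentiable.fun_sum fun s _ => (Differentiable.fun_sum fun p _ =>
      (diff_piMat_entry π hdiff s p).mul_const (q p)).const_mul (μ0 s)).const_mul _
  have hf2 : Differentiable ℝ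
      (fun t => dOcc P γ μ0 (π t) ⬝ᵥ (r - psiMat P γ (π t) *ᵥ q)) := by
    have e : (fun t => dOcc P γ μ0 (π t) ⬝ᵥ (r - psiMat P γ (π t) *ᵥ q))
        = fun t => ∑ p, dOcc P γ μ0 (π t) p * (r p - ∑ p', psiMat P γ (π t) p p' * q p') := by
      funext t; simp [dotProduct, Matrix.mulVec, Pi.sub_apply]
    rw [e]
    exact Differentiable.fun_sum fun p _ =>
      (diff_dOcc_entry P γ μ0 π hP hγ0 hγ1 hdiff hpol p).mul
        ((differentiable_const _).sub (Differentiable.fun_sum fun p' _ =>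
          (diff_psi_entry P γ π hdiff p p').mul_const (q p')))
  have hFc : ∀ p' : S × A, Differentiable ℝ (fun t => ((psiMat P γ (π t))ᵀ *ᵥ
      (Matrix.diagonal (dOcc P γ μ0 (π t)) *ᵥ (psiMat P γ (π t) *ᵥ q - r))) p') := by
    intro p'
    have e : (fun t => ((psiMat P γ (π t))ᵀ *ᵥ
        (Matrix.diagonal (dOcc P γ μ0 (π t)) *ᵥ (psiMat P γ (π t) *ᵥ q - r))) p')
        = fun t => ∑ p, psiMat P γ (π t) p p' *
            (dOcc P γ μ0 (π t) p * ((∑ j, psiMat P γ (π t) p j * q j) - r p)) := by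
      funext t
      simp only [Matrix.mulVec, dotProduct, Matrix.transpose_apply, Pi.sub_apply]
      refine Finset.sum_congr rfl fun p _ => ?_
      congr 1
      simp [Matrix.diagonal_apply, ite_mul, Finset.sum_ite_eq, Matrix.mulVec, dotProduct]
    rw [e]
    exact Differentiable.fun_sum fun p _ =>
      (diff_psi_entry P γ π hdiff p p').mul
        ((diff_dOcc_entry P γ μ0 π hP hγ0 hγ1 hdiff hpol p).mul
          ((Differentiable.fun_sum fun j _ =>
            (diff_psi_entry P γ π hdiff p j).mul_const (q j)).sub_const (r p)))
  -- sum of components of F equals -(1-γ) * f2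
  have hsumF : ∀ t, (∑ p', ((psiMat P γ (π t))ᵀ *ᵥ
      (Matrix.diagonal (dOcc P γ μ0 (π t)) *ᵥ (psiMat P γ (π t) *ᵥ q - r))) p')
      = -(1 - γ) * (dOcc P γ μ0 (π t) ⬝ᵥ (r - psiMat P γ (π t) *ᵥ q)) := by
    intro t
    have hrowsum : ∀ p, (∑ p', psiMat P γ (π t) p p') = 1 - γ := by
      intro p
      have := congrFun (psiMat_mulVec_ones P γ (π t) hP (hpol t)) p
      simpa [Matrix.mulVec, dotProduct] using this
    calc ∑ p', ((psiMat P γ (π t))ᵀ *ᵥ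
        (Matrix.diagonal (dOcc P γ μ0 (π t)) *ᵥ (psiMat P γ (π t) *ᵥ q - r))) p'
        = ∑ p', ∑ p, psiMat P γ (π t) p p' *
            ((Matrix.diagonal (dOcc P γ μ0 (π t)) *ᵥ (psiMat P γ (π t) *ᵥ q - r)) p) := by
          simp [Matrix.mulVec, dotProduct, Matrix.transpose_apply]
      _ = ∑ p, (∑ p', psiMat P γ (π t) p p') *
            ((Matrix.diagonal (dOcc P γ μ0 (π t)) *ᵥ (psiMat P γ (π t) *ᵥ q - r)) p) := by
          rw [Finset.sum_comm]
          exact Finset.sum_congr rfl fun p _ => (Finset.sum_mul _ _ _).symm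
      _ = ∑ p, (1 - γ) * (dOcc P γ μ0 (π t) p * ((psiMat P γ (π t) *ᵥ q) p - r p)) := by
          refine Finset.sum_congr rfl fun p _ => ?_
          rw [hrowsum p, Matrix.mulVec_diagonal]
          simp [Pi.sub_apply]
      _ = -(1 - γ) * (dOcc P γ μ0 (π t) ⬝ᵥ (r - psiMat P γ (π t) *ᵥ q)) := by
          simp only [dotProduct, Pi.sub_apply, Finset.mul_sum]
          exact Finset.sum_congr rfl fun p _ => by ring
  -- pointwise identity f1 + f2 = f3
  have hf1f2 : ∀ t, (1 - γ) * (μ0 ⬝ᵥ (piMat (π t) *ᵥ q))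
      + dOcc P γ μ0 (π t) ⬝ᵥ (r - psiMat P γ (π t) *ᵥ q)
      = dOcc P γ μ0 (π t) ⬝ᵥ r := by
    intro t
    have h1 : dOcc P γ μ0 (π t) ⬝ᵥ (psiMat P γ (π t) *ᵥ q)
        = (1 - γ) * (μ0 ⬝ᵥ (piMat (π t) *ᵥ q)) := by
      rw [Matrix.dotProduct_mulVec, ← Matrix.transpose_transpose (psiMat P γ (π t)),
        Matrix.vecMul_transpose, psiT_mulVec_dOcc P γ (π t) μ0 hP hγ0 hγ1 (hpol t),
        smul_dotProduct]
      rw [dotProduct_comm, Matrix.dotProduct_mulVec, ← Matrix.transpose_transpose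
        (piMat (π t)), Matrix.vecMul_transpose, Matrix.transpose_transpose,
        dotProduct_comm]
      simp
    rw [dotProduct_sub, h1]
    ring
  -- the key computation: (M *ᵥ u) i = - fderiv f2
  have key : ((Matrix.of fun j p' =>
        fderiv ℝ (fun t => (psiMat P γ (π t))ᵀ *ᵥ
          (Matrix.diagonal (dOcc P γ μ0 (π t)) *ᵥ (psiMat P γ (π t) *ᵥ q - r)))
          θ (Pi.single j 1) p')
      *ᵥ (((psiMat P γ (π θ))ᵀ * Matrix.diagonal (dOcc P γ μ0 (π θ)) * psiMat P γ (π θ))⁻¹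
        *ᵥ ((1 - γ) • ((piMat (π θ))ᵀ *ᵥ μ0)))) i
      = - fderiv ℝ (fun t => dOcc P γ μ0 (π t) ⬝ᵥ (r - psiMat P γ (π t) *ᵥ q)) θ
          (Pi.single i 1) := by
    rw [hu]
    have hMentry : ∀ (j : Fin n) (p' : S × A),
        fderiv ℝ (fun t => (psiMat P γ (π t))ᵀ *ᵥ
          (Matrix.diagonal (dOcc P γ μ0 (π t)) *ᵥ (psiMat P γ (π t) *ᵥ q - r)))
          θ (Pi.single j 1) p'
        = fderiv ℝ (fun t => ((psiMat P γ (π t))ᵀ *ᵥ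
            (Matrix.diagonal (dOcc P γ μ0 (π t)) *ᵥ (psiMat P γ (π t) *ᵥ q - r))) p')
            θ (Pi.single j 1) := by
      intro j p'
      rw [fderiv_pi (fun p'' => (hFc p'').differentiableAt)]
      rfl
    have step1 : ((Matrix.of fun j p' =>
        fderiv ℝ (fun t => (psiMat P γ (π t))ᵀ *ᵥ
          (Matrix.diagonal (dOcc P γ μ0 (π t)) *ᵥ (psiMat P γ (π t) *ᵥ q - r)))
          θ (Pi.single j 1) p') *ᵥ (fun _ => (1 - γ)⁻¹)) i
        = (1 - γ)⁻¹ * ∑ p', fderiv ℝ (fun t => ((psiMat P γ (π t))ᵀ *ᵥ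
            (Matrix.diagonal (dOcc P γ μ0 (π t)) *ᵥ (psiMat P γ (π t) *ᵥ q - r))) p')
            θ (Pi.single i 1) := by
      simp only [Matrix.mulVec, dotProduct, Matrix.of_apply, hMentry]
      rw [Finset.mul_sum]
      exact Finset.sum_congr rfl fun p' _ => by ring
    rw [step1]
    have step2 : (∑ p', fderiv ℝ (fun t => ((psiMat P γ (π t))ᵀ *ᵥ
        (Matrix.diagonal (dOcc P γ μ0 (π t)) *ᵥ (psiMat P γ (π t) *ᵥ q - r))) p')
        θ (Pi.single i 1))
        = fderiv ℝ (fun t => ∑ p', ((psiMat P γ (π t))ᵀ *ᵥ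
            (Matrix.diagonal (dOcc P γ μ0 (π t)) *ᵥ (psiMat P γ (π t) *ᵥ q - r))) p')
            θ (Pi.single i 1) := by
      rw [fderiv_fun_sum (fun p' _ => (hFc p').differentiableAt)]
      simp [ContinuousLinearMap.sum_apply]
    rw [step2]
    have step3 : (fun t => ∑ p', ((psiMat P γ (π t))ᵀ *ᵥ
        (Matrix.diagonal (dOcc P γ μ0 (π t)) *ᵥ (psiMat P γ (π t) *ᵥ q - r))) p')
        = fun t => -(1 - γ) * (dOcc P γ μ0 (π t) ⬝ᵥ (r - psiMat P γ (π t) *ᵥ q)) :=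
      funext hsumF
    rw [step3, fderiv_const_mul (hf2 θ) (-(1 - γ))]
    simp only [ContinuousLinearMap.coe_smul', Pi.smul_apply, smul_eq_mul]
    field_simp
  constructor
  · rw [key]; ring
  · rw [key]
    have e3 : (fun t => dOcc P γ μ0 (π t) ⬝ᵥ r)
        = fun t => (1 - γ) * (μ0 ⬝ᵥ (piMat (π t) *ᵥ q))
            + dOcc P γ μ0 (π t) ⬝ᵥ (r - psiMat P γ (π t) *ᵥ q) :=
      funext fun t => (hf1f2 t).symm
    rw [e3, fderiv_fun_add (hf1 θ) (hf2 θ)]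
    simp only [ContinuousLinearMap.add_apply]
    ring
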